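/- Let l ≥ 4 and (p₁, …, p_l) be as in the context. Then: (1) Δ(n) ≥ 0 for every integer n > N₀; (2) Δ(n) = −Δ(N₀ − n) for every integer n with 0 ≤ n ≤ N₀; (3) Δ(n) ∈ {−(l−2), …, −1, 0, 1, …, l−2} for every integer n with 0 ≤ n ≤ N₀. -/

import Mathlib

/-- For `l ≥ 4` pairwise coprime integers `1 < p₁ < … < p_l`, the function `Δ` satisfies:
(1) `Δ(n) ≥ 0` for `n > N₀`; (2) `Δ(n) = -Δ(N₀ - n)` for `0 ≤ n ≤ N₀`;
(3) `-(l-2) ≤ Δ(n) ≤ l-2` for `0 ≤ n ≤ N₀`, where `N₀ = P((l-2) - Σᵢ 1/pᵢ)`. -/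
theorem stmt_9 (l : ℕ) (hl : 4 ≤ l) (p : Fin l → ℕ)
    (hp1 : ∀ i, 1 < p i) (hmono : StrictMono p)
    (hcop : ∀ i j, i ≠ j → Nat.Coprime (p i) (p j))
    (e0 : ℤ) (p' : Fin l → ℕ) (hp' : ∀ i, p' i ≤ p i - 1)
    (heq : e0 * ∏ i, (p i : ℤ)
      + ∑ i, (∏ j ∈ Finset.univ.erase i, (p j : ℤ)) * (p' i : ℤ) = -1)
    (Δ : ℕ → ℤ)
    (hΔ : ∀ n : ℕ, Δ n = 1 + |e0| * n - ∑ i, ⌈(n * p' i : ℚ) / p i⌉)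
    (N0 : ℕ)
    (hN0 : (N0 : ℤ) = ((l : ℤ) - 2) * ∏ i, (p i : ℤ)
      - ∑ i, ∏ j ∈ Finset.univ.erase i, (p j : ℤ)) :
    (∀ n : ℕ, N0 < n → 0 ≤ Δ n) ∧
    (∀ n : ℕ, n ≤ N0 → Δ n = -Δ (N0 - n)) ∧
    (∀ n : ℕ, n ≤ N0 → -((l : ℤ) - 2) ≤ Δ n ∧ Δ n ≤ (l : ℤ) - 2) := by
  classical
  have hpi0 : ∀ i, (0:ℚ) < (p i : ℚ) := fun i => by
    have := hp1 i; positivity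
  have hpine : ∀ i, ((p i:ℚ)) ≠ 0 := fun i => (hpi0 i).ne'
  set P : ℚ := ∏ i, (p i : ℚ) with hPdef
  have hP0 : 0 < P := Finset.prod_pos (fun i _ => hpi0 i)
  have hQ : ∀ i : Fin l, (∏ j ∈ Finset.univ.erase i, (p j:ℚ)) = P / (p i:ℚ) := by
    intro i
    rw [eq_div_iff (hpine i), mul_comm, hPdef]
    exact Finset.mul_prod_erase Finset.univ (fun j => ((p j : ℕ) : ℚ)) (Finset.mem_univ i)
  set c : Fin l → ℕ → ℤ :=
    fun i n => ⌈(n * p' i : ℚ) / p i⌉ * (p i : ℤ) - n * p' i with hc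
  have hc0 : ∀ (i) (n : ℕ), 0 ≤ c i n := by
    intro i n
    have h := Int.le_ceil ((n * p' i : ℚ) / p i)
    rw [div_le_iff₀ (hpi0 i)] at h
    have h2 : (0:ℚ) ≤ (⌈(n * p' i : ℚ)/p i⌉ : ℚ) * p i - n * p' i := by linarith
    simp only [hc]
    exact_mod_cast h2
  have hc1 : ∀ (i) (n : ℕ), c i n ≤ (p i : ℤ) - 1 := by
    intro i n
    have h := Int.ceil_lt_add_one ((n * p' i : ℚ) / p i)
    rw [div_add' _ _ _ (hpine i), lt_div_iff₀ (hpi0 i)] at h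
    have h2 : (⌈(n * p' i : ℚ)/p i⌉ : ℚ) * p i - n * p' i < p i := by linarith
    have h3 : c i n < (p i : ℤ) := by simp only [hc]; exact_mod_cast h2
    omega
  -- rational version of heq
  have he0q : (e0:ℚ) * P + ∑ i, (P / p i) * (p' i : ℚ) = -1 := by
    have h := heq
    have h2 : ((e0 * ∏ i, (p i : ℤ)
      + ∑ i, (∏ j ∈ Finset.univ.erase i, (p j : ℤ)) * (p' i : ℤ) : ℤ) : ℚ) = ((-1 : ℤ) : ℚ) := by
      exact_mod_cast congrArg (fun z : ℤ => (z : ℚ)) h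
    push_cast at h2
    rw [← h2]
    congr 1
    apply Finset.sum_congr rfl
    intro i _
    rw [hQ i]
  have he0neg : e0 < 0 := by
    have hsum0 : (0:ℚ) ≤ ∑ i, (P / p i) * (p' i : ℚ) :=
      Finset.sum_nonneg fun i _ => by positivity
    have h1 : (e0:ℚ) * P ≤ -1 := by linarith
    by_contra h
    push_neg at h
    have : (0:ℚ) ≤ (e0:ℚ) * P := by
      have : (0:ℚ) ≤ (e0:ℚ) := by exact_mod_cast h
      positivity
    linarith
  have he0f : -(e0:ℚ) = 1/P + ∑ i, (p' i : ℚ) / p i := by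
    have hmul : (-(e0:ℚ)) * P = (1/P + ∑ i, (p' i : ℚ) / p i) * P := by
      rw [add_mul, Finset.sum_mul, one_div, inv_mul_cancel₀ hP0.ne']
      have hs : ∑ i, (p' i:ℚ)/p i * P = ∑ i, (P/p i)*(p' i:ℚ) :=
        Finset.sum_congr rfl (fun i _ => by field_simp)
      rw [hs]; linarith
    exact mul_right_cancel₀ hP0.ne' hmul
  -- rational formula for Δ
  have hDq : ∀ n : ℕ, (Δ n : ℚ) = 1 + n / P - ∑ i, (c i n : ℚ) / p i := by
    intro n
    have habs : |e0| = -e0 := abs_of_neg he0neg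
    have h2 : ((Δ n : ℤ) : ℚ)
        = ((1 + |e0| * n - ∑ i, ⌈(n * p' i : ℚ) / p i⌉ : ℤ) : ℚ) := by
      exact_mod_cast congrArg (fun z : ℤ => (z : ℚ)) (hΔ n)
    rw [habs] at h2
    push_cast at h2
    rw [h2, he0f, add_mul, Finset.sum_mul, one_div, inv_mul_eq_div]
    have hs : ∑ i, (c i n : ℚ) / p i
        = ∑ i, ((⌈(n * p' i : ℚ) / p i⌉ : ℚ) - (p' i : ℚ)/p i * n) := by
      apply Finset.sum_congr rfl
      intro i _
      simp only [hc]
      push_cast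
      rw [sub_div, mul_div_cancel_right₀ _ (hpine i)]
      ring
    rw [hs, Finset.sum_sub_distrib]
    ring
  -- N0 / P
  have hN0q : (N0:ℚ) = ((l:ℚ) - 2 - ∑ i, 1/(p i:ℚ)) * P := by
    have h2 : ((N0:ℤ):ℚ) = ((((l : ℤ) - 2) * ∏ i, (p i : ℤ)
      - ∑ i, ∏ j ∈ Finset.univ.erase i, (p j : ℤ) : ℤ) : ℚ) := by
      exact_mod_cast congrArg (fun z : ℤ => (z : ℚ)) hN0
    push_cast at h2
    rw [← hPdef] at h2
    have hs : ∑ i, (1/(p i:ℚ)) * P = ∑ i, ∏ j ∈ Finset.univ.erase i, (p j:ℚ) :=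
      Finset.sum_congr rfl fun i _ => by rw [hQ i, one_div, inv_mul_eq_div]
    rw [h2]
    have hs2 : ((l:ℚ) - 2 - ∑ i, 1/(p i:ℚ)) * P
        = ((l:ℚ) - 2) * P - ∑ i, (1/(p i:ℚ)) * P := by
      rw [sub_mul, Finset.sum_mul]
    rw [hs2, hs]
  have hN0P : (N0:ℚ)/P = (l:ℚ) - 2 - ∑ i, 1/(p i:ℚ) := by
    rw [hN0q, mul_div_cancel_right₀ _ hP0.ne']
  -- divisibility facts in ℤ
  have hdvdP : ∀ i : Fin l, (p i:ℤ) ∣ ∏ j, (p j:ℤ) :=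
    fun i => Finset.dvd_prod_of_mem _ (Finset.mem_univ i)
  have hdvdQ : ∀ i j : Fin l, i ≠ j →
      (p i:ℤ) ∣ ∏ k ∈ Finset.univ.erase j, (p k:ℤ) :=
    fun i j hij => Finset.dvd_prod_of_mem _
      (Finset.mem_erase.mpr ⟨hij, Finset.mem_univ i⟩)
  have hdvd1 : ∀ i : Fin l,
      (p i:ℤ) ∣ (∏ j ∈ Finset.univ.erase i, (p j:ℤ)) * (p' i : ℤ) + 1 := by
    intro i
    have h := heq
    rw [← Finset.add_sum_erase _ _ (Finset.mem_univ i)] at h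
    have h2 : (∏ j ∈ Finset.univ.erase i, (p j:ℤ)) * (p' i : ℤ) + 1
        = -(e0 * ∏ j, (p j:ℤ))
          - ∑ j ∈ Finset.univ.erase i,
              (∏ k ∈ Finset.univ.erase j, (p k:ℤ)) * (p' j : ℤ) := by
      linarith
    rw [h2]
    refine dvd_sub (dvd_neg.mpr ((hdvdP i).mul_left e0)) ?_
    exact Finset.dvd_sum fun j hj =>
      ((hdvdQ i j (Ne.symm ((Finset.mem_erase.mp hj).1))).mul_right _)
  have hdvd2 : ∀ i : Fin l,
      (p i:ℤ) ∣ (N0:ℤ) + ∏ j ∈ Finset.univ.erase i, (p j:ℤ) := by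
    intro i
    have h := hN0
    rw [← Finset.add_sum_erase _ _ (Finset.mem_univ i)] at h
    have h2 : (N0:ℤ) + ∏ j ∈ Finset.univ.erase i, (p j:ℤ)
        = ((l:ℤ) - 2) * ∏ j, (p j:ℤ)
          - ∑ j ∈ Finset.univ.erase i, ∏ k ∈ Finset.univ.erase j, (p k:ℤ) := by
      linarith
    rw [h2]
    refine dvd_sub ((hdvdP i).mul_left _) ?_
    exact Finset.dvd_sum fun j hj =>
      hdvdQ i j (Ne.symm ((Finset.mem_erase.mp hj).1))
  have hkey : ∀ i : Fin l, (p i:ℤ) ∣ (N0:ℤ) * p' i - 1 := by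
    intro i
    have h2 : (N0:ℤ) * p' i - 1
        = ((N0:ℤ) + ∏ j ∈ Finset.univ.erase i, (p j:ℤ)) * (p' i : ℤ)
          - ((∏ j ∈ Finset.univ.erase i, (p j:ℤ)) * (p' i : ℤ) + 1) := by ring
    rw [h2]
    exact dvd_sub ((hdvd2 i).mul_right _) (hdvd1 i)
  -- c i n + c i m = p i - 1 when n + m = N0
  have hcsum : ∀ (i : Fin l) (n m : ℕ), (n:ℤ) + m = N0 →
      c i n + c i m = (p i:ℤ) - 1 := by
    intro i n m hnm
    have hd : (p i:ℤ) ∣ c i n + c i m + 1 := by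
      have h2 : c i n + c i m + 1
          = (⌈(n * p' i : ℚ) / p i⌉ + ⌈(m * p' i : ℚ) / p i⌉) * (p i:ℤ)
            - ((N0:ℤ) * p' i - 1) := by
        simp only [hc]
        rw [← hnm]
        ring
      rw [h2]
      exact dvd_sub ((dvd_refl ((p i:ℤ))).mul_left _) (hkey i)
    have h0n := hc0 i n; have h0m := hc0 i m
    have h1n := hc1 i n; have h1m := hc1 i m
    have hp2 : (2:ℤ) ≤ p i := by exact_mod_cast hp1 i
    obtain ⟨k, hk⟩ := hd
    have hkpos : 0 < k := by
      by_contra hkk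
      push_neg at hkk
      have : (p i:ℤ) * k ≤ 0 := mul_nonpos_of_nonneg_of_nonpos (by linarith) hkk
      linarith
    have hklt : k < 2 := by
      have h2 : (p i:ℤ) * k < (p i:ℤ) * 2 := by linarith
      exact lt_of_mul_lt_mul_left h2 (by linarith)
    have : k = 1 := by omega
    rw [this] at hk
    linarith
  -- bounds on c i n / p i
  have hcdiv_le : ∀ (i) (n : ℕ), (c i n : ℚ) / p i ≤ 1 - 1/(p i:ℚ) := by
    intro i n
    rw [div_le_iff₀ (hpi0 i), sub_mul, one_mul, one_div, inv_mul_cancel₀ (hpine i)]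
    have : ((c i n : ℤ):ℚ) ≤ (p i:ℚ) - 1 := by exact_mod_cast hc1 i n
    linarith
  have hcdiv_0 : ∀ (i) (n : ℕ), (0:ℚ) ≤ (c i n : ℚ) / p i := by
    intro i n
    exact div_nonneg (by exact_mod_cast hc0 i n) (hpi0 i).le
  have hsum_le : ∀ n : ℕ, ∑ i, (c i n : ℚ)/p i ≤ (l:ℚ) - ∑ i, 1/(p i:ℚ) := by
    intro n
    calc ∑ i, (c i n : ℚ)/p i ≤ ∑ i : Fin l, (1 - 1/(p i:ℚ)) :=
          Finset.sum_le_sum fun i _ => hcdiv_le i n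
      _ = (l:ℚ) - ∑ i, 1/(p i:ℚ) := by
          rw [Finset.sum_sub_distrib, Finset.sum_const, Finset.card_univ,
            Fintype.card_fin, nsmul_eq_mul, mul_one]
  have hsum_0 : ∀ n : ℕ, (0:ℚ) ≤ ∑ i, (c i n : ℚ)/p i :=
    fun n => Finset.sum_nonneg fun i _ => hcdiv_0 i n
  have hinv_pos : (0:ℚ) < ∑ i, 1/(p i:ℚ) := by
    have hlpos : 0 < l := by omega
    haveI : Nonempty (Fin l) := Fin.pos_iff_nonempty.mp hlpos
    exact Finset.sum_pos (fun i _ => one_div_pos.mpr (hpi0 i)) Finset.univ_nonempty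
  -- Part 1
  have part1 : ∀ n : ℕ, N0 < n → 0 ≤ Δ n := by
    intro n hn
    have hge : (N0:ℚ) + 1 ≤ n := by exact_mod_cast hn
    have hnP : ((N0:ℚ) + 1)/P ≤ (n:ℚ)/P := by gcongr
    have h1P : (0:ℚ) < 1/P := one_div_pos.mpr hP0
    have hdiv : ((N0:ℚ) + 1)/P = (N0:ℚ)/P + 1/P := by ring
    have hlt : (-1:ℚ) < (Δ n : ℚ) := by
      rw [hDq n]
      have := hsum_le n
      rw [hdiv, hN0P] at hnP
      linarith
    have : (-1:ℤ) < Δ n := by exact_mod_cast hlt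
    omega
  -- Part 2
  have part2 : ∀ n : ℕ, n ≤ N0 → Δ n + Δ (N0 - n) = 0 := by
    intro n hn
    have hnm : (n:ℤ) + (N0 - n : ℕ) = N0 := by omega
    have hq : (Δ n : ℚ) + (Δ (N0 - n) : ℚ) = 0 := by
      rw [hDq n, hDq (N0 - n)]
      have hs : ∑ i, (c i n : ℚ)/p i + ∑ i, (c i (N0 - n) : ℚ)/p i
          = ∑ i : Fin l, (1 - 1/(p i:ℚ)) := by
        rw [← Finset.sum_add_distrib]
        apply Finset.sum_congr rfl
        intro i _
        have h := hcsum i n (N0 - n) hnm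
        have h2 : ((c i n : ℤ):ℚ) + ((c i (N0 - n) : ℤ):ℚ) = (p i:ℚ) - 1 := by
          exact_mod_cast congrArg (fun z : ℤ => (z : ℚ)) h
        rw [← add_div, h2, sub_div, div_self (hpine i)]
      have hs2 : ∑ i : Fin l, ((1:ℚ) - 1/(p i:ℚ)) = (l:ℚ) - ∑ i, 1/(p i:ℚ) := by
        rw [Finset.sum_sub_distrib, Finset.sum_const, Finset.card_univ,
          Fintype.card_fin, nsmul_eq_mul, mul_one]
      have hnmq : (n:ℚ) + ((N0 - n : ℕ):ℚ) = (N0:ℚ) := by exact_mod_cast hnm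
      have hdd : (n:ℚ)/P + ((N0 - n : ℕ):ℚ)/P = (N0:ℚ)/P := by
        rw [← add_div, hnmq]
      rw [hs2] at hs
      rw [hN0P] at hdd
      linarith
    have : Δ n + Δ (N0 - n) = 0 := by exact_mod_cast hq
    linarith
  -- Part 3 upper bound
  have hupper : ∀ n : ℕ, n ≤ N0 → Δ n ≤ (l:ℤ) - 2 := by
    intro n hn
    have hge : (n:ℚ) ≤ N0 := by exact_mod_cast hn
    have hnP : (n:ℚ)/P ≤ (N0:ℚ)/P := by gcongr
    have hlt : (Δ n : ℚ) < (l:ℚ) - 1 := by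
      rw [hDq n]
      have := hsum_0 n
      rw [hN0P] at hnP
      linarith
    have : (Δ n : ℤ) < (l:ℤ) - 1 := by exact_mod_cast hlt
    omega
  refine ⟨part1, fun n hn => by linarith [part2 n hn], fun n hn => ?_⟩
  constructor
  · have h2 := part2 n hn
    have h3 := hupper (N0 - n) (by omega)
    linarith
  · exact hupper n hn
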